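/- The gradient of the smooth objective f(B) = ½‖X − D * B‖_F² with respect to B ∈ ℝ^{r×n×k} is ∇f(B) = D^† * D * B − D^† * X, where D^† is the tensor transpose and * is the t-product. -/

import Mathlib

open scoped BigOperators

/-- Circular convolution of length-`k` tubes. -/
def cconv {k : ℕ} [NeZero k] (a b : ZMod k → ℝ) : ZMod k → ℝ :=
  fun ℓ => ∑ s : ZMod k, a s * b (ℓ - s)

/-- The t-product of third-order tensors. -/
def tProd {k m r n : ℕ} [NeZero k] (D : Fin m → Fin r → ZMod k → ℝ)
    (B : Fin r → Fin n → ZMod k → ℝ) : Fin m → Fin n → ZMod k → ℝ :=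
  fun i j => ∑ q : Fin r, cconv (D i q) (B q j)

/-- Tensor transpose: transpose each frontal slice and reverse the order of slices 2..k. -/
def ttr {k m n : ℕ} [NeZero k] (X : Fin m → Fin n → ZMod k → ℝ) :
    Fin n → Fin m → ZMod k → ℝ :=
  fun j i ℓ => X i j (-ℓ)

/-- Squared Frobenius norm of a third-order tensor. -/
def frobSq {k m n : ℕ} [NeZero k] (Y : Fin m → Fin n → ZMod k → ℝ) : ℝ :=
  ∑ i : Fin m, ∑ j : Fin n, ∑ ℓ : ZMod k, (Y i j ℓ) ^ 2

section Aux

variable {k m r n : ℕ} [NeZero k]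

lemma tProd_add (D : Fin m → Fin r → ZMod k → ℝ) (B B' : Fin r → Fin n → ZMod k → ℝ) :
    tProd D (B + B') = tProd D B + tProd D B' := by
  funext i j ℓ
  simp [tProd, cconv, Finset.sum_apply, mul_add, Finset.sum_add_distrib]

lemma tProd_smul (D : Fin m → Fin r → ZMod k → ℝ) (c : ℝ) (B : Fin r → Fin n → ZMod k → ℝ) :
    tProd D (c • B) = c • tProd D B := by
  funext i j ℓ
  simp only [tProd, cconv, Finset.sum_apply, Pi.smul_apply, smul_eq_mul, Finset.mul_sum]
  congr 1; funext q; congr 1; funext s; ring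

lemma tProd_sub (D : Fin m → Fin r → ZMod k → ℝ) (B B' : Fin r → Fin n → ZMod k → ℝ) :
    tProd D (B - B') = tProd D B - tProd D B' := by
  have h := tProd_add D (B - B') B'
  rw [sub_add_cancel] at h
  rw [h]; abel

/-- the t-product as a continuous linear map in the second argument -/
noncomputable def Aclm (D : Fin m → Fin r → ZMod k → ℝ) :
    (Fin r → Fin n → ZMod k → ℝ) →L[ℝ] (Fin m → Fin n → ZMod k → ℝ) :=
  LinearMap.toContinuousLinearMap
    { toFun := tProd D
      map_add' := tProd_add D
      map_smul' := by intro c B; simpa using tProd_smul D c B }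

@[simp] lemma Aclm_apply (D : Fin m → Fin r → ZMod k → ℝ) (B : Fin r → Fin n → ZMod k → ℝ) :
    Aclm D B = tProd D B := rfl

/-- evaluation at an entry as a continuous linear map -/
noncomputable def eclm (i : Fin m) (j : Fin n) (ℓ : ZMod k) :
    (Fin m → Fin n → ZMod k → ℝ) →L[ℝ] ℝ :=
  ((ContinuousLinearMap.proj ℓ : (ZMod k → ℝ) →L[ℝ] ℝ).comp
    (((ContinuousLinearMap.proj j : (Fin n → ZMod k → ℝ) →L[ℝ] (ZMod k → ℝ))).comp
      (ContinuousLinearMap.proj i : (Fin m → Fin n → ZMod k → ℝ) →L[ℝ] (Fin n → ZMod k → ℝ))))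

omit [NeZero k] in
@[simp] lemma eclm_apply (i : Fin m) (j : Fin n) (ℓ : ZMod k)
    (Y : Fin m → Fin n → ZMod k → ℝ) : eclm i j ℓ Y = Y i j ℓ := rfl

def myEquiv {k m r n : ℕ} [NeZero k] :
    (Fin m × Fin n × ZMod k × Fin r × ZMod k) ≃ (Fin r × Fin n × ZMod k × Fin m × ZMod k) where
  toFun p := (p.2.2.2.1, p.2.1, p.2.2.1 - p.2.2.2.2, p.1, -p.2.2.2.2)
  invFun p := (p.2.2.2.1, p.2.1, p.2.2.1 - p.2.2.2.2, p.1, -p.2.2.2.2)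
  left_inv p := by simp
  right_inv p := by simp

/-- adjoint identity for the t-product -/
lemma adjoint (D : Fin m → Fin r → ZMod k → ℝ) (A : Fin m → Fin n → ZMod k → ℝ)
    (H : Fin r → Fin n → ZMod k → ℝ) :
    ∑ i : Fin m, ∑ j : Fin n, ∑ ℓ : ZMod k, A i j ℓ * tProd D H i j ℓ
      = ∑ q : Fin r, ∑ j : Fin n, ∑ ℓ : ZMod k, tProd (ttr D) A q j ℓ * H q j ℓ := by
  simp only [tProd, cconv, ttr, Finset.sum_apply, Finset.sum_mul, Finset.mul_sum]
  have h1 : (∑ p : Fin m × Fin n × ZMod k × Fin r × ZMod k,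
      A p.1 p.2.1 p.2.2.1 * (D p.1 p.2.2.2.1 p.2.2.2.2 * H p.2.2.2.1 p.2.1 (p.2.2.1 - p.2.2.2.2)))
      = ∑ i : Fin m, ∑ j : Fin n, ∑ ℓ : ZMod k, ∑ q : Fin r, ∑ s : ZMod k,
        A i j ℓ * (D i q s * H q j (ℓ - s)) := by
    simp [Fintype.sum_prod_type]
  have h2 : (∑ p : Fin r × Fin n × ZMod k × Fin m × ZMod k,
      D p.2.2.2.1 p.1 (-p.2.2.2.2) * A p.2.2.2.1 p.2.1 (p.2.2.1 - p.2.2.2.2) * H p.1 p.2.1 p.2.2.1)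
      = ∑ q : Fin r, ∑ j : Fin n, ∑ ℓ : ZMod k, ∑ i : Fin m, ∑ s : ZMod k,
        D i q (-s) * A i j (ℓ - s) * H q j ℓ := by
    simp [Fintype.sum_prod_type]
  rw [← h1, ← h2]
  apply Fintype.sum_equiv (myEquiv (k := k))
  rintro ⟨i, j, ℓ, q, s⟩
  simp [myEquiv]
  ring

lemma hasFDeriv_main (X : Fin m → Fin n → ZMod k → ℝ) (D : Fin m → Fin r → ZMod k → ℝ)
    (B : Fin r → Fin n → ZMod k → ℝ) :
    HasFDerivAt (fun B' : Fin r → Fin n → ZMod k → ℝ => (1 / 2) * frobSq (X - tProd D B'))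
      (∑ i : Fin m, ∑ j : Fin n, ∑ ℓ : ZMod k,
        (1 / 2 : ℝ) • ((X i j ℓ - tProd D B i j ℓ) • (-(eclm i j ℓ ∘L Aclm D)) +
          (X i j ℓ - tProd D B i j ℓ) • (-(eclm i j ℓ ∘L Aclm D)))) B := by
  have hfun : (fun B' : Fin r → Fin n → ZMod k → ℝ => (1 / 2) * frobSq (X - tProd D B'))
      = fun B' => ∑ i : Fin m, ∑ j : Fin n, ∑ ℓ : ZMod k,
          (1 / 2 : ℝ) * ((X i j ℓ - tProd D B' i j ℓ) * (X i j ℓ - tProd D B' i j ℓ)) := by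
    funext B'
    simp [frobSq, Finset.mul_sum, pow_two]
  rw [hfun]
  apply HasFDerivAt.fun_sum
  intro i _
  apply HasFDerivAt.fun_sum
  intro j _
  apply HasFDerivAt.fun_sum
  intro ℓ _
  have h0 : HasFDerivAt (fun B' : Fin r → Fin n → ZMod k → ℝ => tProd D B' i j ℓ)
      (eclm i j ℓ ∘L Aclm D) B := (eclm i j ℓ ∘L Aclm D).hasFDerivAt
  have h1 := h0.const_sub (X i j ℓ)
  exact (h1.mul h1).const_mul (1 / 2)

end Aux

/-- The gradient of `f(B) = ½‖X − D*B‖_F²` is `D† * D * B − D† * X`. -/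
theorem gradient_of_reconstruction {k m r n : ℕ} [NeZero k]
    (X : Fin m → Fin n → ZMod k → ℝ) (D : Fin m → Fin r → ZMod k → ℝ) :
    ∀ B : Fin r → Fin n → ZMod k → ℝ,
      DifferentiableAt ℝ
        (fun B' : Fin r → Fin n → ZMod k → ℝ => (1 / 2) * frobSq (X - tProd D B')) B ∧
      ∀ H : Fin r → Fin n → ZMod k → ℝ,
        fderiv ℝ
          (fun B' : Fin r → Fin n → ZMod k → ℝ => (1 / 2) * frobSq (X - tProd D B')) B H =
          ∑ q : Fin r, ∑ j : Fin n, ∑ ℓ : ZMod k,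
            (tProd (ttr D) (tProd D B) - tProd (ttr D) X) q j ℓ * H q j ℓ := by
  intro B
  have hf := hasFDeriv_main X D B
  refine ⟨hf.differentiableAt, fun H => ?_⟩
  rw [hf.fderiv]
  have e1 : (∑ i : Fin m, ∑ j : Fin n, ∑ ℓ : ZMod k,
      (1 / 2 : ℝ) • ((X i j ℓ - tProd D B i j ℓ) • (-(eclm i j ℓ ∘L Aclm D)) +
        (X i j ℓ - tProd D B i j ℓ) • (-(eclm i j ℓ ∘L Aclm D)))) H
      = ∑ i : Fin m, ∑ j : Fin n, ∑ ℓ : ZMod k,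
          (tProd D B - X) i j ℓ * tProd D H i j ℓ := by
    simp only [ContinuousLinearMap.coe_sum', Finset.sum_apply,
      ContinuousLinearMap.coe_smul', Pi.smul_apply, ContinuousLinearMap.add_apply,
      ContinuousLinearMap.neg_apply, ContinuousLinearMap.coe_comp', Function.comp_apply,
      smul_eq_mul, Pi.sub_apply, Aclm_apply, eclm_apply]
    refine Finset.sum_congr rfl fun i _ => Finset.sum_congr rfl fun j _ =>
      Finset.sum_congr rfl fun ℓ _ => ?_
    ring
  rw [e1, adjoint D (tProd D B - X) H, tProd_sub]
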